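/- Let G ⊆ F be an additive subgroup of order 2d (d ≥ 2) and let φ, ψ : G → F be additive maps with Tr[((φ(s) + φ(t))·(ψ(s) + ψ(t)))/(s + t)²] = 1 for all distinct s, t ∈ G (so the conics D_t : (φ(t)/t)X1² + X1X3 + (ψ(t)/t)X3² + tX2² = 0, t ∈ G \ {0}, together with the nucleus form a degree-2d maximal arc of Mathon type in the plane X0 = 0). Suppose there are a subgroup H of G of index 2 and constants α0, β0 ∈ F with φ(t) = α0·t and ψ(t) = β0·t for all t ∈ H (so the sub-arc on H is of Denniston type of degree d). Then all Denniston lines of the arc are concurrent: there exists a nonzero triple (z1, z2, z3) ∈ F³ such that (φ(t)/t + φ(t')/t')·z1 + (t + t')·z2 + (ψ(t)/t + ψ(t')/t')·z3 = 0 for all distinct t, t' ∈ G \ {0}. -/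

import Mathlib

/-!
STATEMENT 14: Concurrency of the Denniston lines (Lemma 9 of the paper).  Let a
degree-`2d` maximal arc of Mathon type be given by an additive subgroup `G` of
order `2d` and additive maps `φ, ψ` satisfying the flock trace condition, and
suppose the sub-arc corresponding to an index-2 subgroup `H` of `G` is of
Denniston type (`φ(t) = α0·t`, `ψ(t) = β0·t` on `H`).  Then all Denniston lines
of the arc are concurrent: there is a nonzero `(z1,z2,z3)` with
`(φ(t)/t + φ(t')/t')·z1 + (t + t')·z2 + (ψ(t)/t + ψ(t')/t')·z3 = 0`
for all distinct nonzero `t, t' ∈ G`.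
-/

noncomputable section

abbrev F (h : ℕ) : Type := GaloisField 2 h

/-- The absolute trace map from `GF(2^h)` onto `GF(2)`. -/
def Tr {h : ℕ} (x : F h) : ZMod 2 := Algebra.trace (ZMod 2) (F h) x

theorem stmt14 (h : ℕ) (hh : h ≠ 0) (d : ℕ) (hd : 2 ≤ d)
    (G : AddSubgroup (F h)) (hG : Nat.card G = 2 * d)
    (φ ψ : F h → F h)
    (hφ : ∀ s ∈ G, ∀ t ∈ G, φ (s + t) = φ s + φ t)
    (hψ : ∀ s ∈ G, ∀ t ∈ G, ψ (s + t) = ψ s + ψ t)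
    (htr : ∀ s ∈ G, ∀ t ∈ G, s ≠ t →
        Tr ((φ s + φ t) * (ψ s + ψ t) / (s + t) ^ 2) = 1)
    (H : AddSubgroup (F h)) (hHG : H ≤ G) (hH : Nat.card H = d)
    (α0 β0 : F h)
    (hα0 : ∀ t ∈ H, φ t = α0 * t) (hβ0 : ∀ t ∈ H, ψ t = β0 * t) :
    ∃ z : Fin 3 → F h, z ≠ 0 ∧
      ∀ t ∈ G, ∀ t' ∈ G, t ≠ 0 → t' ≠ 0 → t ≠ t' →
        (φ t / t + φ t' / t') * z 0 + (t + t') * z 1 +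
          (ψ t / t + ψ t' / t') * z 2 = 0 := by
  classical
  have char2 : ∀ a : F h, a + a = 0 := CharTwo.add_self_eq_zero
  have hd0 : d ≠ 0 := by omega
  -- finiteness of G
  have hGfin : (G : Set (F h)).Finite := by
    have : Nat.card (G : Set (F h)) ≠ 0 := by
      have : Nat.card G = Nat.card (G : Set (F h)) := rfl
      omega
    rcases Nat.card_ne_zero.mp this with ⟨_, hf⟩
    exact Set.finite_coe_iff.mp hf
  have hncG : (G : Set (F h)).ncard = 2 * d := by
    rw [← Nat.card_coe_set_eq]; exact hG
  have hncH : (H : Set (F h)).ncard = d := by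
    rw [← Nat.card_coe_set_eq]; exact hH
  have hsub : (H : Set (F h)) ⊆ (G : Set (F h)) := hHG
  have hHfin : (H : Set (F h)).Finite := hGfin.subset hsub
  -- key: sum of two non-H elements of G is in H
  have key : ∀ t ∈ G, t ∉ H → ∀ t' ∈ G, t' ∉ H → t + t' ∈ H := by
    intro t htG htH t' ht'G ht'H
    have himg : (fun x => t + x) '' (H : Set (F h)) ⊆ (G : Set (F h)) \ (H : Set (F h)) := by
      rintro _ ⟨x, hx, rfl⟩
      refine ⟨G.add_mem htG (hHG hx), fun hm => htH ?_⟩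
      have : (t + x) + x ∈ H := H.add_mem hm hx
      rwa [add_assoc, char2 x, add_zero] at this
    have hinj : Function.Injective (fun x : F h => t + x) := add_right_injective t
    have hcard : ((G : Set (F h)) \ (H : Set (F h))).ncard ≤
        ((fun x => t + x) '' (H : Set (F h))).ncard := by
      rw [Set.ncard_image_of_injective _ hinj, Set.ncard_diff hsub hHfin, hncG, hncH]
      omega
    have heq := Set.eq_of_subset_of_ncard_le himg hcard hGfin.diff
    have ht' : t' ∈ (fun x => t + x) '' (H : Set (F h)) := by
      rw [heq]; exact ⟨ht'G, ht'H⟩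
    rcases ht' with ⟨x, hx, hxe⟩
    have : t + t' = x := by
      rw [← hxe, ← add_assoc, char2 t, zero_add]
    rwa [this]
  -- get u ∈ G \ H
  have hne : ∃ u, u ∈ G ∧ u ∉ H := by
    by_contra hc
    push_neg at hc
    have : G ≤ H := fun x hx => hc x hx
    have := le_antisymm hHG this
    rw [this, hG] at hH
    omega
  obtain ⟨u, huG, huH⟩ := hne
  set A := φ u + α0 * u with hA
  set B := ψ u + β0 * u with hB
  -- values of φ, ψ off H
  have hφ' : ∀ t ∈ G, t ∉ H → φ t = α0 * t + A := by
    intro t htG htH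
    have htu : t + u ∈ H := key t htG htH u huG huH
    have : φ ((t + u) + u) = φ (t + u) + φ u := hφ _ (G.add_mem htG huG) _ huG
    rw [add_assoc, char2 u, add_zero] at this
    rw [this, hα0 _ htu, hA]; ring
  have hψ' : ∀ t ∈ G, t ∉ H → ψ t = β0 * t + B := by
    intro t htG htH
    have htu : t + u ∈ H := key t htG htH u huG huH
    have : ψ ((t + u) + u) = ψ (t + u) + ψ u := hψ _ (G.add_mem htG huG) _ huG
    rw [add_assoc, char2 u, add_zero] at this
    rw [this, hβ0 _ htu, hB]; ring
  -- quotient form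
  have hdivφ : ∀ t ∈ G, t ≠ 0 → φ t / t = α0 + (if t ∈ H then 0 else 1 / t) * A := by
    intro t htG ht0
    by_cases htH : t ∈ H
    · simp [htH, hα0 _ htH, mul_div_assoc, div_self ht0]
    · rw [if_neg htH, hφ' t htG htH]
      field_simp
  have hdivψ : ∀ t ∈ G, t ≠ 0 → ψ t / t = β0 + (if t ∈ H then 0 else 1 / t) * B := by
    intro t htG ht0
    by_cases htH : t ∈ H
    · simp [htH, hβ0 _ htH, mul_div_assoc, div_self ht0]
    · rw [if_neg htH, hψ' t htG htH]
      field_simp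
  by_cases hAB : A = 0 ∧ B = 0
  · refine ⟨![1, 0, 0], ?_, ?_⟩
    · intro hz
      have := congrFun hz 0
      simp at this
    · intro t htG t' ht'G ht0 ht'0 htt'
      have e1 := hdivφ t htG ht0
      have e2 := hdivφ t' ht'G ht'0
      rw [hAB.1] at e1 e2
      simp only [mul_zero, add_zero] at e1 e2
      simp [e1, e2, char2]
  · refine ⟨![B, 0, A], ?_, ?_⟩
    · intro hz
      exact hAB ⟨by simpa using congrFun hz 2, by simpa using congrFun hz 0⟩
    · intro t htG t' ht'G ht0 ht'0 htt'
      rw [hdivφ t htG ht0, hdivφ t' ht'G ht'0, hdivψ t htG ht0, hdivψ t' ht'G ht'0]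
      set e := (if t ∈ H then 0 else 1 / t) with he
      set e' := (if t' ∈ H then 0 else 1 / t') with he'
      have : (α0 + e * A + (α0 + e' * A)) * ![B, 0, A] 0 + (t + t') * ![B, 0, A] 1 +
          (β0 + e * B + (β0 + e' * B)) * ![B, 0, A] 2
          = (α0 + α0) * B + (β0 + β0) * A + ((e + e') * (A * B) + (e + e') * (A * B)) := by
        simp; ring
      rw [this, char2, char2]
      simp
      exact char2 _
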